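/- Let V₁ and V₂ be finite-dimensional real vector spaces and let C₁ ⊆ V₁ and C₂ ⊆ V₂ be almost compact cones. Then Hom(C₁,C₂) = {f : V₁ → V₂ linear : f(C₁) ⊆ C₂} is an almost compact cone in the vector space of linear maps from V₁ to V₂; that is, Hom(C₁,C₂) is a convex cone that is closed, pointed (Hom(C₁,C₂) ∩ (−Hom(C₁,C₂)) = {0}), and has nonempty interior in Hom(V₁,V₂). -/

import Mathlib

open Set Module

/-- Carathéodory: in finite dimension, the convex hull of a compact set is compact. -/
lemma myIsCompactConvexHull {V : Type*} [NormedAddCommGroup V] [NormedSpace ℝ V]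
    [FiniteDimensional ℝ V] {S : Set V} (hS : IsCompact S) :
    IsCompact (convexHull ℝ S) := by
  classical
  rcases S.eq_empty_or_nonempty with rfl | ⟨s₀, hs₀⟩
  · simp [convexHull_empty, isCompact_empty]
  set N := finrank ℝ V + 1 with hN
  set Φ : (Fin N → ℝ) × (Fin N → V) → V := fun p => ∑ i, p.1 i • p.2 i with hΦ
  have hcont : Continuous Φ := by
    apply continuous_finset_sum
    intro i _
    exact ((continuous_apply i).comp continuous_fst).smul
      ((continuous_apply i).comp continuous_snd)
  set D : Set ((Fin N → ℝ) × (Fin N → V)) :=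
    (stdSimplex ℝ (Fin N)) ×ˢ (Set.univ.pi fun _ => S) with hD
  have hDc : IsCompact D := (isCompact_stdSimplex (𝕜 := ℝ) (ι := Fin N)).prod (isCompact_univ_pi fun _ => hS)
  have himg : convexHull ℝ S = Φ '' D := by
    apply Subset.antisymm
    · intro x hx
      obtain ⟨ι, hfin, z, w, hzS, hindep, hwpos, hwsum, hxeq⟩ :=
        eq_pos_convex_span_of_mem_convexHull hx
      have hcard : Fintype.card ι ≤ N := by
        have h1 := hindep.card_le_finrank_succ
        have h2 : finrank ℝ ↥(vectorSpan ℝ (Set.range z)) ≤ finrank ℝ V :=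
          Submodule.finrank_le _
        omega
      obtain ⟨g⟩ : Nonempty (ι ↪ Fin N) :=
        Function.Embedding.nonempty_of_card_le (by simpa using hcard)
      have hι : Nonempty ι := by
        by_contra h
        rw [not_nonempty_iff] at h
        simp [Finset.univ_eq_empty] at hwsum
      obtain ⟨i₀⟩ := hι
      set w' : Fin N → ℝ := Function.extend g w 0 with hw'
      set z' : Fin N → V := Function.extend g z (fun _ => z i₀) with hz'
      have hginj : Function.Injective g := g.injective
      have hwg : ∀ i, w' (g i) = w i := fun i => hginj.extend_apply _ _ i
      have hzg : ∀ i, z' (g i) = z i := fun i => hginj.extend_apply _ _ i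
      have hw0 : ∀ j, j ∉ Finset.image g Finset.univ → w' j = 0 := by
        intro j hj
        rw [hw', Function.extend_apply']
        · rfl
        · rintro ⟨i, rfl⟩
          exact hj (Finset.mem_image_of_mem _ (Finset.mem_univ _))
      have hsubw : ∑ j, w' j = ∑ i, w i := by
        rw [← Finset.sum_subset (Finset.subset_univ (Finset.image g Finset.univ))
          (fun j _ hj => hw0 j hj), Finset.sum_image (fun a _ b _ h => hginj h)]
        exact Finset.sum_congr rfl fun i _ => hwg i
      have hsubz : ∑ j, w' j • z' j = ∑ i, w i • z i := by
        rw [← Finset.sum_subset (Finset.subset_univ (Finset.image g Finset.univ))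
          (fun j _ hj => by rw [hw0 j hj, zero_smul]),
          Finset.sum_image (fun a _ b _ h => hginj h)]
        exact Finset.sum_congr rfl fun i _ => by rw [hwg, hzg]
      refine ⟨(w', z'), ⟨⟨fun j => ?_, ?_⟩, fun j _ => ?_⟩, ?_⟩
      · show 0 ≤ w' j
        rcases em (∃ i, g i = j) with ⟨i, rfl⟩ | h
        · rw [hwg]; exact (hwpos i).le
        · rw [hw', Function.extend_apply' _ _ _ h]
          rfl
      · show ∑ j, w' j = 1
        rw [hsubw]; exact hwsum
      · show z' j ∈ S
        rcases em (∃ i, g i = j) with ⟨i, rfl⟩ | h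
        · rw [hzg]; exact hzS ⟨i, rfl⟩
        · rw [hz', Function.extend_apply' _ _ _ h]
          exact hzS ⟨i₀, rfl⟩
      · show ∑ j, w' j • z' j = x
        rw [hsubz]; exact hxeq
    · rintro x ⟨⟨w, z⟩, ⟨hw, hz⟩, rfl⟩
      have := Finset.centerMass_mem_convexHull (Finset.univ : Finset (Fin N))
        (w := w) (fun i _ => hw.1 i) (by rw [hw.2]; norm_num)
        (z := z) (fun i _ => hz i (mem_univ i))
      rwa [Finset.centerMass, hw.2, inv_one, one_smul] at this
  rw [himg]
  exact hDc.image hcont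

/-- A closed pointed cone admits a functional uniformly positive on its unit-sphere part. -/
lemma myExistsPosFunctional {V : Type*} [NormedAddCommGroup V] [NormedSpace ℝ V]
    [FiniteDimensional ℝ V] (C : Set V)
    (hadd : ∀ x ∈ C, ∀ y ∈ C, x + y ∈ C)
    (hsmul : ∀ c : ℝ, 0 ≤ c → ∀ x ∈ C, c • x ∈ C)
    (hclosed : IsClosed C) (hpointed : C ∩ (-C) = {0}) :
    ∃ (ℓ : V →L[ℝ] ℝ) (u : ℝ), 0 < u ∧ ∀ x ∈ C, ‖x‖ = 1 → u < ℓ x := by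
  classical
  have h0C : (0 : V) ∈ C := by
    have : (0 : V) ∈ C ∩ (-C) := by rw [hpointed]; exact rfl
    exact this.1
  set S : Set V := C ∩ Metric.sphere 0 1 with hSdef
  have hScomp : IsCompact S :=
    (isCompact_sphere (0 : V) 1).of_isClosed_subset
      (hclosed.inter Metric.isClosed_sphere) inter_subset_right
  have hKcomp : IsCompact (convexHull ℝ S) := myIsCompactConvexHull hScomp
  have h0K : (0 : V) ∉ convexHull ℝ S := by
    intro h0
    obtain ⟨ι, hfin, z, w, hzS, hindep, hwpos, hwsum, hsum0⟩ :=
      eq_pos_convex_span_of_mem_convexHull h0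
    have hι : Nonempty ι := by
      by_contra h
      rw [not_nonempty_iff] at h
      simp [Finset.univ_eq_empty] at hwsum
    obtain ⟨i₀⟩ := hι
    have hsum_mem : ∀ t : Finset ι, ∑ i ∈ t, w i • z i ∈ C := fun t =>
      Finset.sum_induction _ (· ∈ C) (fun a b ha hb => hadd a ha b hb) h0C
        (fun i _ => hsmul _ (hwpos i).le _ (hzS ⟨i, rfl⟩).1)
    have h1 : w i₀ • z i₀ ∈ C := hsmul _ (hwpos i₀).le _ (hzS ⟨i₀, rfl⟩).1
    have h2 : w i₀ • z i₀ = -(∑ i ∈ Finset.univ.erase i₀, w i • z i) := by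
      apply eq_neg_of_add_eq_zero_left
      rw [Finset.add_sum_erase _ (fun i => w i • z i) (Finset.mem_univ i₀)]
      exact hsum0
    have h3 : w i₀ • z i₀ ∈ -C := by
      rw [h2]
      exact Set.neg_mem_neg.mpr (hsum_mem _)
    have h4 : w i₀ • z i₀ = 0 := by
      have : w i₀ • z i₀ ∈ C ∩ (-C) := ⟨h1, h3⟩
      rwa [hpointed, mem_singleton_iff] at this
    have hz0 : z i₀ = 0 := by
      rcases smul_eq_zero.mp h4 with h | h
      · exact absurd h (hwpos i₀).ne'
      · exact h
    have : ‖z i₀‖ = 1 := by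
      have := (hzS ⟨i₀, rfl⟩).2
      rwa [Metric.mem_sphere, dist_zero_right] at this
    rw [hz0, norm_zero] at this
    norm_num at this
  obtain ⟨ℓ, u, hu0, hK⟩ :=
    geometric_hahn_banach_point_closed (convex_convexHull ℝ S) hKcomp.isClosed h0K
  refine ⟨ℓ, u, by simpa using hu0, fun x hx hnx => ?_⟩
  exact hK x (subset_convexHull ℝ S ⟨hx, by simp [hnx]⟩)

/-- A convex cone `C` in a finite-dimensional real vector space is an *almost compact cone*
if it is a convex cone that is closed, pointed (`C ∩ (−C) = {0}`) and full-dimensional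
(nonempty interior). -/
def IsACCone {V : Type*} [NormedAddCommGroup V] [NormedSpace ℝ V] (C : Set V) : Prop :=
  (∀ x ∈ C, ∀ y ∈ C, x + y ∈ C) ∧
  (∀ c : ℝ, 0 ≤ c → ∀ x ∈ C, c • x ∈ C) ∧
  IsClosed C ∧
  C ∩ (-C) = {0} ∧
  (interior C).Nonempty

/-- If `C₁ ⊆ V₁` and `C₂ ⊆ V₂` are almost compact cones, then
`Hom(C₁,C₂) = {f : V₁ → V₂ linear | f(C₁) ⊆ C₂}` is an almost compact cone in the space of
linear maps from `V₁` to `V₂` (in finite dimension, all linear maps are continuous). -/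
theorem hom_cone_is_almost_compact {V₁ V₂ : Type*}
    [NormedAddCommGroup V₁] [NormedSpace ℝ V₁] [FiniteDimensional ℝ V₁]
    [NormedAddCommGroup V₂] [NormedSpace ℝ V₂] [FiniteDimensional ℝ V₂]
    (C₁ : Set V₁) (C₂ : Set V₂) (h₁ : IsACCone C₁) (h₂ : IsACCone C₂) :
    IsACCone {f : V₁ →L[ℝ] V₂ | ∀ x ∈ C₁, f x ∈ C₂} := by
  obtain ⟨hadd₁, hsmul₁, hcl₁, hpt₁, hint₁⟩ := h₁
  obtain ⟨hadd₂, hsmul₂, hcl₂, hpt₂, hint₂⟩ := h₂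
  have h0₂ : (0 : V₂) ∈ C₂ := by
    have : (0 : V₂) ∈ C₂ ∩ (-C₂) := by rw [hpt₂]; exact rfl
    exact this.1
  refine ⟨?_, ?_, ?_, ?_, ?_⟩
  · -- additivity
    intro f hf g hg x hx
    simpa using hadd₂ _ (hf x hx) _ (hg x hx)
  · -- scaling
    intro c hc f hf x hx
    simpa using hsmul₂ c hc _ (hf x hx)
  · -- closedness
    have heq : {f : V₁ →L[ℝ] V₂ | ∀ x ∈ C₁, f x ∈ C₂} =
        ⋂ x ∈ C₁, {f : V₁ →L[ℝ] V₂ | f x ∈ C₂} := by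
      ext f; simp [Set.mem_iInter]
    rw [heq]
    exact isClosed_biInter fun x _ =>
      IsClosed.preimage (ContinuousLinearMap.apply ℝ V₂ x).continuous hcl₂
  · -- pointedness
    ext f
    simp only [Set.mem_inter_iff, Set.mem_neg, Set.mem_setOf_eq, Set.mem_singleton_iff]
    constructor
    · rintro ⟨hf, hnf⟩
      have hzero : ∀ x ∈ C₁, f x = 0 := by
        intro x hx
        have h1 : f x ∈ C₂ := hf x hx
        have h2 : f x ∈ -C₂ := by
          have := hnf x hx
          simpa [Set.mem_neg] using this
        have : f x ∈ C₂ ∩ (-C₂) := ⟨h1, h2⟩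
        rwa [hpt₂, mem_singleton_iff] at this
      obtain ⟨x₀, hx₀⟩ := hint₁
      obtain ⟨ε, hε, hball⟩ : ∃ ε > 0, Metric.ball x₀ ε ⊆ C₁ := by
        rcases Metric.mem_nhds_iff.mp (isOpen_interior.mem_nhds hx₀) with ⟨ε, hε, hb⟩
        exact ⟨ε, hε, hb.trans interior_subset⟩
      ext v
      by_cases hv : v = 0
      · simp [hv]
      · have hnv : 0 < ‖v‖ := norm_pos_iff.mpr hv
        set c : ℝ := ε / (2 * ‖v‖) with hc
        have hc0 : 0 < c := div_pos hε (by positivity)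
        have hcv : c * ‖v‖ = ε / 2 := by
          rw [hc]
          field_simp
        have hmem : x₀ + c • v ∈ C₁ := by
          apply hball
          rw [Metric.mem_ball, dist_eq_norm, add_sub_cancel_left, norm_smul,
            Real.norm_eq_abs, abs_of_pos hc0, hcv]
          linarith
        have e1 : f (x₀ + c • v) = 0 := hzero _ hmem
        have e2 : f x₀ = 0 := hzero _ (hball (Metric.mem_ball_self hε))
        rw [map_add, e2, zero_add, map_smul] at e1
        have : f v = 0 := by
          rcases smul_eq_zero.mp e1 with h | h
          · exact absurd h hc0.ne'
          · exact h
        simpa using this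
    · rintro rfl
      refine ⟨fun x _ => by simpa using h0₂, fun x _ => ?_⟩
      simpa [Set.mem_neg] using h0₂
  · -- nonempty interior
    obtain ⟨y₀, hy₀⟩ := hint₂
    obtain ⟨r, hr, hball⟩ : ∃ r > 0, Metric.ball y₀ r ⊆ C₂ := by
      rcases Metric.mem_nhds_iff.mp (isOpen_interior.mem_nhds hy₀) with ⟨r, hr, hb⟩
      exact ⟨r, hr, hb.trans interior_subset⟩
    obtain ⟨ℓ, u, hu, hpos⟩ := myExistsPosFunctional C₁ hadd₁ hsmul₁ hcl₁ hpt₁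
    set f₀ : V₁ →L[ℝ] V₂ := ℓ.smulRight y₀ with hf₀
    refine ⟨f₀, mem_interior.mpr ⟨Metric.ball f₀ (u * r), ?_, Metric.isOpen_ball,
      Metric.mem_ball_self (by positivity)⟩⟩
    intro g hg x hx
    by_cases hx0 : x = 0
    · rw [hx0, map_zero]; exact h0₂
    set x' : V₁ := ‖x‖⁻¹ • x with hx'
    have hx'C : x' ∈ C₁ := hsmul₁ _ (inv_nonneg.mpr (norm_nonneg x)) x hx
    have hx'n : ‖x'‖ = 1 := by
      rw [hx', norm_smul, norm_inv, norm_norm,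
        inv_mul_cancel₀ (norm_ne_zero_iff.mpr hx0)]
    have ha : u < ℓ x' := hpos x' hx'C hx'n
    have ha0 : 0 < ℓ x' := hu.trans ha
    set e : V₂ := g x' - f₀ x' with he'
    have he : ‖e‖ < u * r := by
      calc ‖e‖ = ‖(g - f₀) x'‖ := by rw [ContinuousLinearMap.sub_apply]
        _ ≤ ‖g - f₀‖ * ‖x'‖ := (g - f₀).le_opNorm x'
        _ = ‖g - f₀‖ := by rw [hx'n, mul_one]
        _ < u * r := by rw [← dist_eq_norm]; exact Metric.mem_ball.mp hg
    have hkey : ‖e‖ < ℓ x' * r := he.trans_le (mul_le_mul_of_nonneg_right ha.le hr.le)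
    have hy : y₀ + (ℓ x')⁻¹ • e ∈ C₂ := by
      apply hball
      rw [Metric.mem_ball, dist_eq_norm, add_sub_cancel_left, norm_smul, norm_inv,
        Real.norm_eq_abs, abs_of_pos ha0]
      calc (ℓ x')⁻¹ * ‖e‖ < (ℓ x')⁻¹ * (ℓ x' * r) :=
            mul_lt_mul_of_pos_left hkey (inv_pos.mpr ha0)
        _ = r := by rw [← mul_assoc, inv_mul_cancel₀ ha0.ne', one_mul]
    have hgx' : g x' ∈ C₂ := by
      have heq : g x' = ℓ x' • (y₀ + (ℓ x')⁻¹ • e) := by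
        rw [smul_add, smul_inv_smul₀ ha0.ne', he']
        rw [hf₀, ContinuousLinearMap.smulRight_apply]
        abel
      rw [heq]
      exact hsmul₂ _ ha0.le _ hy
    have hxeq : x = ‖x‖ • x' := (smul_inv_smul₀ (norm_ne_zero_iff.mpr hx0) x).symm
    rw [hxeq, map_smul]
    exact hsmul₂ _ (norm_nonneg x) _ hgx'
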